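/- Let E be a topological space with ℰ its Borel σ-algebra and give Ω = E^{ℤ^d} the product topology. Let {ρ_i}_{i∈ℤ^d} satisfy λ_i(ρ_i ∣ ω) = 1 for all i and ω, together with hypotheses (H1) and (H2), and let {ρ_Λ}_{Λ∈𝒮} be the constructed family making {ρ_Λ λ_Λ}_{Λ∈𝒮} a specification. Suppose each ρ_i is sequentially continuous and for each finite V ⊆ ℤ^d and j ∉ V there exists x_j ∈ ⋂_ω b(j,V,ω) such that ∫ sup_ω [(ρ_i ρ_j^{-1})(σ_i x_j ω)] λ^i(dσ_i) < ∞ for all i ∈ V. Then the functions ρ_Λ, Λ ∈ 𝒮, are sequentially continuous. -/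

import Mathlib

open MeasureTheory ProbabilityTheory
open scoped ENNReal NNReal

namespace GibbsSingleton

/-- Configuration space `E^ι`. -/
abbrev Config (ι E : Type*) := ι → E

variable {ι E : Type*}

/-- The configuration equal to `σ` on `Λ` and to `ω` off `Λ`. -/
def subst [DecidableEq ι] (Λ : Finset ι) (σ : {x // x ∈ Λ} → E) (ω : Config ι E) :
    Config ι E := fun i => if h : i ∈ Λ then σ ⟨i, h⟩ else ω i

variable [MeasurableSpace E]

/-- The free kernel `λ_Λ` applied to an `ℝ≥0∞`-valued function:
`λ_Λ(h ∣ ω) = ∫ h(σ_Λ ω) λ^Λ(dσ_Λ)`. -/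
noncomputable def freeF [DecidableEq ι] (lam : ι → Measure E) (Λ : Finset ι)
    (h : Config ι E → ℝ≥0∞) (ω : Config ι E) : ℝ≥0∞ :=
  ∫⁻ σ : {x // x ∈ Λ} → E, h (subst Λ σ ω) ∂(Measure.pi fun i : {x // x ∈ Λ} => lam i.1)

/-- The function `ρ_i ρ_j⁻¹`, `ℝ≥0∞`-valued. -/
noncomputable def rat (ρ : ι → Config ι E → ℝ≥0) (i j : ι) (η : Config ι E) : ℝ≥0∞ :=
  (ρ i η : ℝ≥0∞) / (ρ j η : ℝ≥0∞)

/-- The set `b(j,V,ω)` of good configurations at site `j` given `ω` outside `V ∪ {j}`. -/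
noncomputable def bSet [DecidableEq ι] (lam : ι → Measure E) (ρ : ι → Config ι E → ℝ≥0)
    (j : ι) (V : Finset ι) (ω : Config ι E) : Set E :=
  {x | (∀ σ : {y // y ∈ V} → E, 0 < ρ j (subst V σ (Function.update ω j x))) ∧
    ∀ i, i ≠ j →
      0 < (⨅ σ : {y // y ∈ V} → E,
          freeF lam {i} (rat ρ i j) (subst V σ (Function.update ω j x))) ∧
      (⨆ σ : {y // y ∈ V} → E,
          freeF lam {i} (rat ρ i j) (subst V σ (Function.update ω j x))) < ⊤}

/-- The multi-site good set `b(V,W,ω)`. -/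
noncomputable def bSetF [DecidableEq ι] (lam : ι → Measure E) (ρ : ι → Config ι E → ℝ≥0)
    (V W : Finset ι) (ω : Config ι E) : Set ({x // x ∈ V} → E) :=
  {xV | ∀ k : {x // x ∈ V}, xV k ∈ bSet lam ρ k.1 ((V.erase k.1) ∪ W) ω}

/-- The set `B(j,V) = {ω : ω_j ∈ b(j,V,ω)}`. -/
noncomputable def BSet [DecidableEq ι] (lam : ι → Measure E) (ρ : ι → Config ι E → ℝ≥0)
    (j : ι) (V : Finset ι) : Set (Config ι E) :=
  {ω | ω j ∈ bSet lam ρ j V ω}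

/-- Hypothesis (H1): every good set `b(j,V,ω)` is nonempty. -/
def H1 [DecidableEq ι] (lam : ι → Measure E) (ρ : ι → Config ι E → ℝ≥0) : Prop :=
  ∀ (ω : Config ι E) (j : ι) (V : Finset ι), j ∉ V → (bSet lam ρ j V ω).Nonempty

/-- The order-consistency identity appearing in hypothesis (H2), with the convention
`1/∞ = 0` built into `ℝ≥0∞` division. -/
def H2id [DecidableEq ι] (lam : ι → Measure E) (ρ : ι → Config ι E → ℝ≥0)
    (i j : ι) (ω : Config ι E) : Prop :=
  ∀ xi ∈ bSet lam ρ i {j} ω, ∀ xj ∈ bSet lam ρ j {i} ω,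
    ((ρ i ω : ℝ≥0∞) * (ρ j (Function.update ω i xi) : ℝ≥0∞)) /
      ((ρ i (Function.update ω i xi) : ℝ≥0∞) *
        freeF lam {j} (rat ρ j i) (Function.update ω i xi))
    = ((ρ j ω : ℝ≥0∞) * (ρ i (Function.update ω j xj) : ℝ≥0∞)) /
      ((ρ j (Function.update ω j xj) : ℝ≥0∞) *
        freeF lam {i} (rat ρ i j) (Function.update ω j xj))

/-- Hypothesis (H2). -/
def H2 [DecidableEq ι] (lam : ι → Measure E) (ρ : ι → Config ι E → ℝ≥0) : Prop :=
  ∀ i j, i ≠ j → ∀ ω : Config ι E, H2id lam ρ i j ω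

/-- `R_Θ^Γ` evaluated using the choice `x_Θ`:
`((ρ_Θ/ρ_Γ) ⬝ λ_Γ(ρ_Γ ρ_Θ⁻¹))(x_Θ ω)`. -/
noncomputable def Rexpr [DecidableEq ι] (lam : ι → Measure E)
    (ρF : Finset ι → Config ι E → ℝ≥0) (Θ Γ : Finset ι) (x : {y // y ∈ Θ} → E)
    (ω : Config ι E) : ℝ≥0∞ :=
  ((ρF Θ (subst Θ x ω) : ℝ≥0∞) / (ρF Γ (subst Θ x ω) : ℝ≥0∞)) *
    freeF lam Γ (fun η => (ρF Γ η : ℝ≥0∞) / (ρF Θ η : ℝ≥0∞)) (subst Θ x ω)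

/-- The family `ρ_Λ` is obtained from the singletons `ρ_i` by the recursive construction
`ρ_{Λ∪{i}} = ρ_Λ / R_Λ^i`, `R_Λ^i(ω) = ((ρ_Λ/ρ_i) ⬝ λ_i(ρ_i ρ_Λ⁻¹))(x_Λ ω)`,
`x_Λ ∈ b(Λ,{i},ω)` (the value being independent of this choice). -/
def IsRec [DecidableEq ι] (lam : ι → Measure E) (ρ : ι → Config ι E → ℝ≥0)
    (ρF : Finset ι → Config ι E → ℝ≥0) : Prop :=
  (∀ ω, ρF ∅ ω = 1) ∧ (∀ i, ρF {i} = ρ i) ∧ (∀ Λ, Measurable (ρF Λ)) ∧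
  ∀ (Λ : Finset ι) (i : ι), i ∉ Λ → ∀ ω : Config ι E,
    (∀ x ∈ bSetF lam ρ Λ {i} ω, ∀ x' ∈ bSetF lam ρ Λ {i} ω,
      Rexpr lam ρF Λ {i} x ω = Rexpr lam ρF Λ {i} x' ω) ∧
    ∀ x ∈ bSetF lam ρ Λ {i} ω,
      (ρF (insert i Λ) ω : ℝ≥0∞) = (ρF Λ ω : ℝ≥0∞) / Rexpr lam ρF Λ {i} x ω

/-- The sub-σ-algebra `𝓕_U` of events generated by the coordinates in `U`. -/
def cylSigma (E : Type*) [MeasurableSpace E] {ι : Type*} (U : Set ι) :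
    MeasurableSpace (Config ι E) :=
  MeasurableSpace.comap (fun ω (i : U) => ω i.1) MeasurableSpace.pi

/-- A specification: a family of probability kernels, measurable w.r.t. the outside
σ-algebra, proper, and consistent. -/
def IsSpecification (γ : Finset ι → Kernel (Config ι E) (Config ι E)) : Prop :=
  (∀ Λ, IsMarkovKernel (γ Λ)) ∧
  (∀ (Λ : Finset ι) (A : Set (Config ι E)), MeasurableSet A →
    Measurable[cylSigma E ((Λ : Set ι)ᶜ)] fun ω => γ Λ ω A) ∧
  (∀ (Λ : Finset ι) (B : Set (Config ι E)), MeasurableSet[cylSigma E ((Λ : Set ι)ᶜ)] B →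
    ∀ ω, γ Λ ω B = B.indicator (fun _ => (1 : ℝ≥0∞)) ω) ∧
  (∀ Λ Δ : Finset ι, Λ ⊆ Δ → (γ Λ).comp (γ Δ) = γ Δ)

/-- The kernel family `γ` is `{ρ_Λ λ_Λ}`. -/
def MatchesDensity [DecidableEq ι] (lam : ι → Measure E)
    (γ : Finset ι → Kernel (Config ι E) (Config ι E))
    (ρF : Finset ι → Config ι E → ℝ≥0) : Prop :=
  ∀ (Λ : Finset ι) (ω : Config ι E) (A : Set (Config ι E)), MeasurableSet A →
    γ Λ ω A = freeF lam Λ (fun η => (ρF Λ η : ℝ≥0∞) * A.indicator (fun _ => 1) η) ω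

end GibbsSingleton

namespace GibbsSingleton

open MeasureTheory Filter Topology
open scoped ENNReal NNReal

variable {ι E : Type*} [MeasurableSpace E]

section Aux

variable [DecidableEq ι]

lemma subst_apply_of_mem {Λ : Finset ι} {σ : {x // x ∈ Λ} → E} {ω : Config ι E} {m : ι}
    (hm : m ∈ Λ) : subst Λ σ ω m = σ ⟨m, hm⟩ := dif_pos hm

lemma subst_apply_of_not_mem {Λ : Finset ι} {σ : {x // x ∈ Λ} → E} {ω : Config ι E} {m : ι}
    (hm : m ∉ Λ) : subst Λ σ ω m = ω m := dif_neg hm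

lemma subst_eq_self {Λ : Finset ι} {x : {y // y ∈ Λ} → E} {ω : Config ι E}
    (h : ∀ j : {y // y ∈ Λ}, ω j.1 = x j) : subst Λ x ω = ω := by
  funext m
  by_cases hm : m ∈ Λ
  · rw [subst_apply_of_mem hm]; exact (h ⟨m, hm⟩).symm
  · exact subst_apply_of_not_mem hm

lemma subst_subst {Λ : Finset ι} (x : {y // y ∈ Λ} → E) (ω : Config ι E) :
    subst Λ x (subst Λ x ω) = subst Λ x ω :=
  subst_eq_self fun j => subst_apply_of_mem j.2

lemma update_subst {Λ : Finset ι} {k : ι} (hk : k ∉ Λ) (x : {y // y ∈ Λ} → E)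
    (ω : Config ι E) (e : E) :
    Function.update (subst Λ x ω) k e = subst Λ x (Function.update ω k e) := by
  funext m
  by_cases hm : m ∈ Λ
  · have hmk : m ≠ k := fun h => hk (h ▸ hm)
    rw [Function.update_of_ne hmk, subst_apply_of_mem hm, subst_apply_of_mem hm]
  · rw [subst_apply_of_not_mem hm]
    by_cases hmk : m = k
    · subst hmk; rw [Function.update_self, Function.update_self]
    · rw [Function.update_of_ne hmk, Function.update_of_ne hmk, subst_apply_of_not_mem hm]

/-- positivity of `ρ j` at any configuration whose `j`-th coordinate is a uniformly
good value. -/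
lemma pos_of_bSet {lam : ι → Measure E} {ρ : ι → Config ι E → ℝ≥0} {j : ι} {V : Finset ι}
    {x : E} (hx : ∀ ω, x ∈ bSet lam ρ j V ω) (hj : j ∉ V) {η : Config ι E}
    (hη : η j = x) : 0 < ρ j η := by
  have h1 := (hx η).1 (fun m => η m.1)
  have hconf : subst V (fun m => η m.1) (Function.update η j x) = η := by
    funext m
    by_cases hm : m ∈ V
    · rw [subst_apply_of_mem hm]
    · rw [subst_apply_of_not_mem hm]
      by_cases hmj : m = j
      · subst hmj; rw [Function.update_self, hη]
      · rw [Function.update_of_ne hmj]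
  rwa [hconf] at h1

/-- `bSet` is antitone in `V` (for configurations with the exterior fixed). -/
lemma bSet_anti {lam : ι → Measure E} {ρ : ι → Config ι E → ℝ≥0} {j : ι} {V V' : Finset ι}
    (hVV : V ⊆ V') (hj : j ∉ V') (ω : Config ι E) :
    bSet lam ρ j V' ω ⊆ bSet lam ρ j V ω := by
  intro x hx
  have key : ∀ σ : {y // y ∈ V} → E,
      subst V σ (Function.update ω j x) =
        subst V' (fun m => if h : m.1 ∈ V then σ ⟨m.1, h⟩ else ω m.1)
          (Function.update ω j x) := by
    intro σ
    funext m
    by_cases hm : m ∈ V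
    · rw [subst_apply_of_mem hm, subst_apply_of_mem (hVV hm)]
      simp [hm]
    · rw [subst_apply_of_not_mem hm]
      by_cases hm' : m ∈ V'
      · have hmj : m ≠ j := fun h => hj (h ▸ hm')
        rw [subst_apply_of_mem hm', Function.update_of_ne hmj]
        simp [hm]
      · rw [subst_apply_of_not_mem hm']
  refine ⟨fun σ => ?_, fun i hi => ?_⟩
  · rw [key σ]; exact hx.1 _
  · obtain ⟨h1, h2⟩ := hx.2 i hi
    constructor
    · refine lt_of_lt_of_le h1 (le_iInf fun σ => ?_)
      rw [key σ]
      exact iInf_le (fun σ' => freeF lam {i} (rat ρ i j) (subst V' σ' (Function.update ω j x))) _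
    · refine lt_of_le_of_lt (iSup_le fun σ => ?_) h2
      rw [key σ]
      exact le_iSup (fun σ' => freeF lam {i} (rat ρ i j) (subst V' σ' (Function.update ω j x))) _

/-- The free kernel at a singleton is just integration of the `i`-th coordinate. -/
lemma freeF_singleton (lam : ι → Measure E) (i : ι) (h : Config ι E → ℝ≥0∞)
    (ω : Config ι E) :
    freeF lam {i} h ω = ∫⁻ e, h (Function.update ω i e) ∂(lam i) := by
  letI : Unique {x // x ∈ ({i} : Finset ι)} :=
    ⟨⟨⟨i, Finset.mem_singleton_self i⟩⟩, fun a => Subtype.ext (Finset.mem_singleton.mp a.2)⟩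
  have hμ : (Measure.pi fun m : {x // x ∈ ({i} : Finset ι)} => lam m.1)
      = Measure.pi fun _ : {x // x ∈ ({i} : Finset ι)} => lam i := by
    congr 1
    funext m
    rw [show m.1 = i from Finset.mem_singleton.mp m.2]
  have hmp := measurePreserving_funUnique (lam i) {x // x ∈ ({i} : Finset ι)}
  have hkey := MeasurePreserving.lintegral_map_equiv (ν := lam i)
    (fun e => h (Function.update ω i e)) (MeasurableEquiv.funUnique _ E) hmp
  have hs : ∀ σ : {x // x ∈ ({i} : Finset ι)} → E,
      subst {i} σ ω = Function.update ω i (σ default) := by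
    intro σ
    funext m
    by_cases hm : m ∈ ({i} : Finset ι)
    · have hmi : m = i := Finset.mem_singleton.mp hm
      subst hmi
      rw [subst_apply_of_mem hm, Function.update_self]
      exact congrArg σ (Subsingleton.elim _ _)
    · have hmi : m ≠ i := fun h => hm (h ▸ Finset.mem_singleton_self i)
      rw [subst_apply_of_not_mem hm, Function.update_of_ne hmi]
  rw [freeF, hμ, hkey]
  refine lintegral_congr fun σ => ?_
  rw [hs σ]
  rfl

end Aux

/-- `ρ_i / ρ_Λ` as an `ℝ≥0∞`-valued function. -/
noncomputable def Qf (ρ : ι → Config ι E → ℝ≥0) (ρF : Finset ι → Config ι E → ℝ≥0)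
    (Λ : Finset ι) (i : ι) (ξ : Config ι E) : ℝ≥0∞ :=
  (ρ i ξ : ℝ≥0∞) / (ρF Λ ξ : ℝ≥0∞)

/-- `λ_i(ρ_i ρ_Λ⁻¹ ∣ ζ)`. -/
noncomputable def Iint [DecidableEq ι] (lam : ι → Measure E) (ρ : ι → Config ι E → ℝ≥0)
    (ρF : Finset ι → Config ι E → ℝ≥0) (Λ : Finset ι) (i : ι) (ζ : Config ι E) : ℝ≥0∞ :=
  ∫⁻ e, Qf ρ ρF Λ i (Function.update ζ i e) ∂(lam i)

lemma Iint_pos [DecidableEq ι] {lam : ι → Measure E} {ρ : ι → Config ι E → ℝ≥0}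
    {ρF : Finset ι → Config ι E → ℝ≥0} {Λ : Finset ι} {i : ι} {ζ : Config ι E}
    (hρ : Measurable (ρ i)) (hρF : Measurable (ρF Λ))
    (h1 : ∫⁻ e, (ρ i (Function.update ζ i e) : ℝ≥0∞) ∂(lam i) = 1) :
    0 < Iint lam ρ ρF Λ i ζ := by
  rw [pos_iff_ne_zero]
  intro h0
  have hm : Measurable fun e => Qf ρ ρF Λ i (Function.update ζ i e) := by
    simp only [Qf]
    exact ((hρ.comp (measurable_update ζ)).coe_nnreal_ennreal).div
      ((hρF.comp (measurable_update ζ)).coe_nnreal_ennreal)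
  rw [Iint, lintegral_eq_zero_iff hm] at h0
  have hz : (fun e => (ρ i (Function.update ζ i e) : ℝ≥0∞)) =ᵐ[lam i] 0 := by
    refine h0.mono fun e he => ?_
    simp only [Pi.zero_apply] at he ⊢
    rcases ENNReal.div_eq_zero_iff.mp he with h | h
    · exact h
    · exact absurd h (ENNReal.coe_ne_top)
  have := lintegral_congr_ae hz
  rw [h1] at this
  simp at this

lemma enn_alg1 {a b c : ℝ≥0∞} (ha0 : a ≠ 0) (hat : a ≠ ⊤) (hc0 : c ≠ 0) (hct : c ≠ ⊤)
    (hbt : b ≠ ⊤) : a / (a / b * c) = b / c := by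
  rcases eq_or_ne b 0 with rfl | hb0
  · rw [ENNReal.div_zero ha0, ENNReal.top_mul hc0, ENNReal.div_top, ENNReal.zero_div]
  · lift a to ℝ≥0 using hat
    lift b to ℝ≥0 using hbt
    lift c to ℝ≥0 using hct
    have ha : a ≠ 0 := by simpa using ha0
    have hb : b ≠ 0 := by simpa using hb0
    have hc : c ≠ 0 := by simpa using hc0
    rw [← ENNReal.coe_div hb, ← ENNReal.coe_mul,
      ← ENNReal.coe_div (mul_ne_zero (div_ne_zero ha hb) hc), ← ENNReal.coe_div hc,
      ENNReal.coe_inj]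
    rw [div_mul_eq_mul_div, div_div_eq_mul_div, mul_div_mul_left _ _ ha]

lemma enn_alg2 {a b C I : ℝ≥0∞} (hat : a ≠ ⊤) (hbt : b ≠ ⊤) (hI0 : I ≠ 0) (hIC : I ≤ C)
    (hCt : C ≠ ⊤) : a / (b / I) ≤ C * (a / b) := by
  have hC0 : C ≠ 0 := fun h => hI0 (le_antisymm (h ▸ hIC) (zero_le))
  rcases eq_or_ne b 0 with rfl | hb0
  · rcases eq_or_ne a 0 with rfl | ha0
    · simp
    · rw [ENNReal.zero_div, ENNReal.div_zero ha0, ENNReal.mul_top hC0]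
  · have h1 : b / C ≤ b / I := ENNReal.div_le_div_left hIC b
    calc a / (b / I) ≤ a / (b / C) := ENNReal.div_le_div_left h1 a
    _ = C * (a / b) := by
        lift a to ℝ≥0 using hat
        lift b to ℝ≥0 using hbt
        lift C to ℝ≥0 using hCt
        have hb : b ≠ 0 := by simpa using hb0
        have hC : C ≠ 0 := by simpa using hC0
        rw [← ENNReal.coe_div hC, ← ENNReal.coe_div (div_ne_zero hb hC), ← ENNReal.coe_div hb,
          ← ENNReal.coe_mul, ENNReal.coe_inj]
        rw [div_div_eq_mul_div, mul_comm a C, mul_div_assoc]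

/-- The per-site goodness-plus-integrability hypothesis extracted from `hint`. -/
def Hyp [DecidableEq ι] (lam : ι → Measure E) (ρ : ι → Config ι E → ℝ≥0)
    (Λ W : Finset ι) (x : {y // y ∈ Λ} → E) : Prop :=
  Disjoint Λ W ∧ ∀ j : {y // y ∈ Λ},
    (∀ ω, x j ∈ bSet lam ρ j.1 ((Λ.erase j.1) ∪ W) ω) ∧
    ∀ i ∈ (Λ.erase j.1) ∪ W,
      (∫⁻ σ : E, (⨆ ω : Config ι E,
        rat ρ i j.1 (Function.update (Function.update ω j.1 (x j)) i σ)) ∂(lam i)) < ⊤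

end GibbsSingleton

open GibbsSingleton MeasureTheory ProbabilityTheory

/-- **Theorem 1 (II), continuity.**  Suppose `E` is a topological space with its Borel
σ-algebra and `Ω` carries the product topology.  If the singleton densities `ρ_i` are
sequentially continuous and for each finite `V` and `j ∉ V` there is a uniformly good
configuration `x_j ∈ ⋂_ω b(j,V,ω)` with
`∫ sup_ω (ρ_i ρ_j⁻¹)(σ_i x_j ω) λ^i(dσ_i) < ∞` for all `i ∈ V`, then each function
`ρ_Λ` of the recursively constructed family is sequentially continuous. -/
theorem constructed_family_seqContinuous
    {d : ℕ} (hd : 0 < d) {E : Type*} [TopologicalSpace E] [MeasurableSpace E] [BorelSpace E]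
    (lam : (Fin d → ℤ) → Measure E)
    (ρ : (Fin d → ℤ) → Config (Fin d → ℤ) E → ℝ≥0)
    (hmeas : ∀ i, Measurable (ρ i))
    (hnorm : ∀ (i : Fin d → ℤ) (ω : Config (Fin d → ℤ) E),
      freeF lam {i} (fun η => (ρ i η : ℝ≥0∞)) ω = 1)
    (h1 : H1 lam ρ) (h2 : H2 lam ρ)
    (ρF : Finset (Fin d → ℤ) → Config (Fin d → ℤ) E → ℝ≥0)
    (hrec : IsRec lam ρ ρF)
    (hcont : ∀ i, SeqContinuous (ρ i))
    (hint : ∀ (V : Finset (Fin d → ℤ)) (j : Fin d → ℤ), j ∉ V →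
      ∃ x : E, (∀ ω : Config (Fin d → ℤ) E, x ∈ bSet lam ρ j V ω) ∧
        ∀ i ∈ V,
          (∫⁻ σ : E, (⨆ ω : Config (Fin d → ℤ) E,
            rat ρ i j (Function.update (Function.update ω j x) i σ)) ∂(lam i)) < ⊤) :
    ∀ Λ : Finset (Fin d → ℤ), SeqContinuous (ρF Λ) := by
  obtain ⟨hempty, hsingle, hρFmeas, hstep⟩ := hrec
  -- normalization in coordinates
  have hnorm' : ∀ (i : Fin d → ℤ) (ζ : Config (Fin d → ℤ) E),
      ∫⁻ e, (ρ i (Function.update ζ i e) : ℝ≥0∞) ∂(lam i) = 1 := by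
    intro i ζ
    have h := hnorm i ζ
    rwa [freeF_singleton] at h
  have hIpos : ∀ (Λ : Finset (Fin d → ℤ)) (i : Fin d → ℤ) ζ, 0 < Iint lam ρ ρF Λ i ζ :=
    fun Λ i ζ => Iint_pos (hmeas i) (hρFmeas Λ) (hnorm' i ζ)
  -- uniformly good families exist
  have hypExists : ∀ (Λ W : Finset (Fin d → ℤ)), Disjoint Λ W →
      ∃ x : {y // y ∈ Λ} → E, Hyp lam ρ Λ W x := by
    intro Λ W hdisj
    have hnotin : ∀ j : {y // y ∈ Λ}, j.1 ∉ Λ.erase j.1 ∪ W := by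
      intro j hmem
      rcases Finset.mem_union.mp hmem with h | h
      · exact Finset.notMem_erase _ _ h
      · exact Finset.disjoint_left.mp hdisj j.2 h
    refine ⟨fun j => (hint _ j.1 (hnotin j)).choose, hdisj, fun j => ?_⟩
    obtain ⟨hb, hi⟩ := (hint _ j.1 (hnotin j)).choose_spec
    exact ⟨hb, hi⟩
  -- main induction
  have key : ∀ Λ : Finset (Fin d → ℤ),
      SeqContinuous (ρF Λ) ∧
      (∀ (W : Finset (Fin d → ℤ)) (x : {y // y ∈ Λ} → E), Hyp lam ρ Λ W x →
        ∀ ω, 0 < ρF Λ (subst Λ x ω)) ∧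
      (∀ (W : Finset (Fin d → ℤ)) (x : {y // y ∈ Λ} → E), Hyp lam ρ Λ W x →
        ∀ i ∈ W, Λ.Nonempty →
        ∃ g : E → ℝ≥0∞, (∫⁻ e, g e ∂(lam i)) ≠ ⊤ ∧
          ∀ ω e, Qf ρ ρF Λ i (Function.update (subst Λ x ω) i e) ≤ g e) := by
    intro Λ
    induction Λ using Finset.induction_on with
    | empty =>
      refine ⟨?_, ?_, ?_⟩
      · have h1' : ρF ∅ = fun _ => 1 := funext hempty
        rw [h1']
        exact continuous_const.seqContinuous
      · intro W x hx ω
        rw [hempty]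
        exact one_pos
      · intro W x hx i hi hne
        exact absurd hne (by simp)
    | @insert k Λ hk IH =>
      obtain ⟨IHcont, IHpos, IHdom⟩ := IH
      -- restriction of a good family on `insert k Λ` to `Λ`
      have hrestrict : ∀ (W : Finset (Fin d → ℤ)) (x' : {y // y ∈ insert k Λ} → E),
          Hyp lam ρ (insert k Λ) W x' →
          Hyp lam ρ Λ (insert k W) (fun j => x' ⟨j.1, Finset.mem_insert_of_mem j.2⟩) := by
        intro W x' hx'
        obtain ⟨hdisj, hx'2⟩ := hx'
        have hdΛW : Disjoint Λ W := Finset.disjoint_of_subset_left (Finset.subset_insert _ _) hdisj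
        refine ⟨?_, fun j => ?_⟩
        · rw [Finset.disjoint_insert_right]
          exact ⟨hk, hdΛW⟩
        · have hj' : j.1 ∈ insert k Λ := Finset.mem_insert_of_mem j.2
          have hne : j.1 ≠ k := fun h => hk (h ▸ j.2)
          have hset : (insert k Λ).erase j.1 ∪ W = Λ.erase j.1 ∪ insert k W := by
            ext m
            simp only [Finset.mem_union, Finset.mem_erase, Finset.mem_insert]
            constructor
            · rintro (⟨hmj, (rfl | hmΛ)⟩ | hmW)
              · exact Or.inr (Or.inl rfl)
              · exact Or.inl ⟨hmj, hmΛ⟩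
              · exact Or.inr (Or.inr hmW)
            · rintro (⟨hmj, hmΛ⟩ | (rfl | hmW))
              · exact Or.inl ⟨hmj, Or.inr hmΛ⟩
              · exact Or.inl ⟨hne.symm, Or.inl rfl⟩
              · exact Or.inr hmW
          obtain ⟨hb, hi⟩ := hx'2 ⟨j.1, hj'⟩
          rw [hset] at hb hi
          exact ⟨hb, hi⟩
      -- membership in `bSetF` from `Hyp`
      have hbSetF : ∀ (W₀ : Finset (Fin d → ℤ)) (x : {y // y ∈ Λ} → E),
          Hyp lam ρ Λ W₀ x → k ∈ W₀ → ∀ ω, x ∈ bSetF lam ρ Λ ({k} : Finset (Fin d → ℤ)) ω := by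
        intro W₀ x hx hkW ω j
        have hj' : j.1 ∉ Λ.erase j.1 ∪ W₀ := by
          intro hmem
          rcases Finset.mem_union.mp hmem with h | h
          · exact Finset.notMem_erase _ _ h
          · exact Finset.disjoint_left.mp hx.1 j.2 h
        refine bSet_anti ?_ hj' ω (hx.2 j |>.1 ω)
        exact Finset.union_subset_union_right (Finset.singleton_subset_iff.mpr hkW)
      -- the recursion formula
      have hformula : ∀ (W₀ : Finset (Fin d → ℤ)) (x : {y // y ∈ Λ} → E),
          Hyp lam ρ Λ W₀ x → k ∈ W₀ → ∀ ω,
          (ρF (insert k Λ) ω : ℝ≥0∞) =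
            (ρF Λ ω : ℝ≥0∞) /
              (((ρF Λ (subst Λ x ω) : ℝ≥0∞) / (ρ k (subst Λ x ω) : ℝ≥0∞)) *
                Iint lam ρ ρF Λ k (subst Λ x ω)) := by
        intro W₀ x hx hkW ω
        have h1' := (hstep Λ k hk ω).2 x (hbSetF W₀ x hx hkW ω)
        rw [h1']
        congr 1
        rw [show Rexpr lam ρF Λ {k} x ω =
            ((ρF Λ (subst Λ x ω) : ℝ≥0∞) / (ρF {k} (subst Λ x ω) : ℝ≥0∞)) *
              freeF lam {k} (fun η => (ρF {k} η : ℝ≥0∞) / (ρF Λ η : ℝ≥0∞)) (subst Λ x ω)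
          from rfl, hsingle k, freeF_singleton]
        rfl
      -- uniform bound on `Iint` over configurations pinned by a good family
      have hCb : ∀ (W₀ : Finset (Fin d → ℤ)) (x : {y // y ∈ Λ} → E), Hyp lam ρ Λ W₀ x →
          ∀ i ∈ W₀, ∃ C, C ≠ ⊤ ∧ ∀ ζ, subst Λ x ζ = ζ → Iint lam ρ ρF Λ i ζ ≤ C := by
        intro W₀ x hx i hiW
        rcases Finset.eq_empty_or_nonempty Λ with rfl | hne
        · refine ⟨1, ENNReal.one_ne_top, fun ζ hζ => ?_⟩
          have : Iint lam ρ ρF ∅ i ζ = 1 := by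
            rw [Iint]
            simp only [Qf, hempty, ENNReal.coe_one, div_one]
            exact hnorm' i ζ
          exact this.le
        · obtain ⟨g, hg, hbound⟩ := IHdom W₀ x hx i hiW hne
          refine ⟨∫⁻ e, g e ∂(lam i), hg, fun ζ hζ => ?_⟩
          rw [Iint]
          refine lintegral_mono fun e => ?_
          have h := hbound ζ e
          rwa [hζ] at h
      -- packaged formula for pinned configurations
      have hF : ∀ (W : Finset (Fin d → ℤ)) (x' : {y // y ∈ insert k Λ} → E),
          Hyp lam ρ (insert k Λ) W x' →
          ∀ ζ, (∀ j : {y // y ∈ insert k Λ}, ζ j.1 = x' j) →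
            (ρF (insert k Λ) ζ : ℝ≥0∞) = (ρ k ζ : ℝ≥0∞) / Iint lam ρ ρF Λ k ζ ∧
            Iint lam ρ ρF Λ k ζ ≠ ⊤ := by
        intro W x' hx' ζ hζ
        have hxr := hrestrict W x' hx'
        set xr : {y // y ∈ Λ} → E := fun j => x' ⟨j.1, Finset.mem_insert_of_mem j.2⟩ with hxrdef
        have hsub : subst Λ xr ζ = ζ := subst_eq_self fun j => hζ ⟨j.1, Finset.mem_insert_of_mem j.2⟩
        obtain ⟨C, hCt, hCb'⟩ := hCb (insert k W) xr hxr k (Finset.mem_insert_self _ _)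
        have hIt : Iint lam ρ ρF Λ k ζ ≠ ⊤ := ((hCb' ζ hsub).trans_lt hCt.lt_top).ne
        have hI0 : Iint lam ρ ρF Λ k ζ ≠ 0 := (hIpos Λ k ζ).ne'
        have hpos : 0 < ρF Λ ζ := by
          have h := IHpos (insert k W) xr hxr ζ
          rwa [hsub] at h
        have hform := hformula (insert k W) xr hxr (Finset.mem_insert_self _ _) ζ
        rw [hsub] at hform
        rw [hform]
        refine ⟨enn_alg1 ?_ ENNReal.coe_ne_top hI0 hIt ENNReal.coe_ne_top, hIt⟩
        exact_mod_cast hpos.ne'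
      refine ⟨?_, ?_, ?_⟩
      -- (a) sequential continuity
      · rcases Finset.eq_empty_or_nonempty Λ with rfl | hne
        · have hsk : ρF (insert k ∅) = ρ k := by
            rw [show (insert k ∅ : Finset (Fin d → ℤ)) = {k} from rfl, hsingle k]
          rw [hsk]
          exact hcont k
        · obtain ⟨xt, hxt⟩ := hypExists Λ {k} (Finset.disjoint_singleton_right.mpr hk)
          have hformΛ := hformula {k} xt hxt (Finset.mem_singleton_self k)
          obtain ⟨g, hgint, hgbound⟩ := IHdom {k} xt hxt k (Finset.mem_singleton_self k) hne
          obtain ⟨C, hCt, hCle⟩ := hCb {k} xt hxt k (Finset.mem_singleton_self k)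
          intro u p hup
          rw [show (ρF (insert k Λ) ∘ u) = fun n => ρF (insert k Λ) (u n) from rfl]
          rw [← ENNReal.tendsto_coe]
          have hsubcont : ∀ {v : ℕ → Config (Fin d → ℤ) E} {q : Config (Fin d → ℤ) E},
              Filter.Tendsto v Filter.atTop (nhds q) →
              Filter.Tendsto (fun n => subst Λ xt (v n)) Filter.atTop (nhds (subst Λ xt q)) := by
            intro v q hv
            rw [tendsto_pi_nhds]
            intro m
            by_cases hm : m ∈ Λ
            · simp only [subst_apply_of_mem hm]
              exact tendsto_const_nhds
            · simp only [subst_apply_of_not_mem hm]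
              exact tendsto_pi_nhds.mp hv m
          have hupdcont : ∀ e : E,
              Filter.Tendsto (fun n => Function.update (subst Λ xt (u n)) k e) Filter.atTop
                (nhds (Function.update (subst Λ xt p) k e)) := by
            intro e
            rw [tendsto_pi_nhds]
            intro m
            by_cases hm : m = k
            · subst hm
              simp only [Function.update_self]
              exact tendsto_const_nhds
            · simp only [Function.update_of_ne hm]
              exact tendsto_pi_nhds.mp (hsubcont hup) m
          have hη := hsubcont hup
          -- limits
          have ha'0 : (ρF Λ (subst Λ xt p) : ℝ≥0∞) ≠ 0 := by
            exact_mod_cast (IHpos {k} xt hxt p).ne'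
          have hc0 : Iint lam ρ ρF Λ k (subst Λ xt p) ≠ 0 := (hIpos Λ k _).ne'
          have hct : Iint lam ρ ρF Λ k (subst Λ xt p) ≠ ⊤ :=
            ((hCle _ (subst_subst xt p)).trans_lt hCt.lt_top).ne
          have hA : Filter.Tendsto (fun n => (ρF Λ (u n) : ℝ≥0∞)) Filter.atTop (nhds (ρF Λ p : ℝ≥0∞)) :=
            ENNReal.tendsto_coe.mpr (IHcont hup)
          have hA' : Filter.Tendsto (fun n => (ρF Λ (subst Λ xt (u n)) : ℝ≥0∞)) Filter.atTop
              (nhds (ρF Λ (subst Λ xt p) : ℝ≥0∞)) := ENNReal.tendsto_coe.mpr (IHcont hη)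
          have hB : Filter.Tendsto (fun n => (ρ k (subst Λ xt (u n)) : ℝ≥0∞)) Filter.atTop
              (nhds (ρ k (subst Λ xt p) : ℝ≥0∞)) := ENNReal.tendsto_coe.mpr (hcont k hη)
          have hc : Filter.Tendsto (fun n => Iint lam ρ ρF Λ k (subst Λ xt (u n))) Filter.atTop
              (nhds (Iint lam ρ ρF Λ k (subst Λ xt p))) := by
            simp only [Iint]
            refine tendsto_lintegral_of_dominated_convergence g (fun n => ?_) (fun n => ?_)
              hgint ?_
            · simp only [Qf]
              exact ((hmeas k).comp (measurable_update _)).coe_nnreal_ennreal.div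
                (((hρFmeas Λ).comp (measurable_update _)).coe_nnreal_ennreal)
            · exact Filter.Eventually.of_forall fun e => hgbound (u n) e
            · refine Filter.Eventually.of_forall fun e => ?_
              simp only [Qf]
              have hden0 : (ρF Λ (Function.update (subst Λ xt p) k e) : ℝ≥0∞) ≠ 0 := by
                rw [update_subst hk]
                exact_mod_cast (IHpos {k} xt hxt (Function.update p k e)).ne'
              refine ENNReal.Tendsto.div ?_ (Or.inr hden0) ?_ (Or.inl ENNReal.coe_ne_top)
              · exact ENNReal.tendsto_coe.mpr (hcont k (hupdcont e))
              · exact ENNReal.tendsto_coe.mpr (IHcont (hupdcont e))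
          have hq0 : (ρF Λ (subst Λ xt p) : ℝ≥0∞) / (ρ k (subst Λ xt p) : ℝ≥0∞) ≠ 0 :=
            (ENNReal.div_pos ha'0 ENNReal.coe_ne_top).ne'
          have hRdiv : Filter.Tendsto (fun n =>
              (ρF Λ (subst Λ xt (u n)) : ℝ≥0∞) / (ρ k (subst Λ xt (u n)) : ℝ≥0∞)) Filter.atTop
              (nhds ((ρF Λ (subst Λ xt p) : ℝ≥0∞) / (ρ k (subst Λ xt p) : ℝ≥0∞))) :=
            ENNReal.Tendsto.div hA' (Or.inl ha'0) hB (Or.inl ENNReal.coe_ne_top)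
          have hR : Filter.Tendsto (fun n =>
              ((ρF Λ (subst Λ xt (u n)) : ℝ≥0∞) / (ρ k (subst Λ xt (u n)) : ℝ≥0∞)) *
                Iint lam ρ ρF Λ k (subst Λ xt (u n))) Filter.atTop
              (nhds (((ρF Λ (subst Λ xt p) : ℝ≥0∞) / (ρ k (subst Λ xt p) : ℝ≥0∞)) *
                Iint lam ρ ρF Λ k (subst Λ xt p))) :=
            ENNReal.Tendsto.mul hRdiv (Or.inl hq0) hc (Or.inl hc0)
          have hR0 : ((ρF Λ (subst Λ xt p) : ℝ≥0∞) / (ρ k (subst Λ xt p) : ℝ≥0∞)) *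
              Iint lam ρ ρF Λ k (subst Λ xt p) ≠ 0 := mul_ne_zero hq0 hc0
          have hfinal := ENNReal.Tendsto.div hA (Or.inr hR0) hR (Or.inr ENNReal.coe_ne_top)
          have heq : ∀ ω, (ρF (insert k Λ) ω : ℝ≥0∞) =
              (ρF Λ ω : ℝ≥0∞) /
                (((ρF Λ (subst Λ xt ω) : ℝ≥0∞) / (ρ k (subst Λ xt ω) : ℝ≥0∞)) *
                  Iint lam ρ ρF Λ k (subst Λ xt ω)) := hformΛ
          rw [show (fun n => ((ρF (insert k Λ) (u n) : ℝ≥0∞))) = fun n =>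
              (ρF Λ (u n) : ℝ≥0∞) /
                (((ρF Λ (subst Λ xt (u n)) : ℝ≥0∞) / (ρ k (subst Λ xt (u n)) : ℝ≥0∞)) *
                  Iint lam ρ ρF Λ k (subst Λ xt (u n))) from funext fun n => heq (u n),
            heq p]
          exact hfinal
      -- (b) positivity
      · intro W x' hx' ω
        have hζ : ∀ j : {y // y ∈ insert k Λ}, subst (insert k Λ) x' ω j.1 = x' j :=
          fun j => subst_apply_of_mem j.2
        obtain ⟨hfeq, hIt⟩ := hF W x' hx' (subst (insert k Λ) x' ω) hζ
        have hkmem : k ∈ insert k Λ := Finset.mem_insert_self _ _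
        have hknot : k ∉ (insert k Λ).erase k ∪ W := by
          intro hmem
          rcases Finset.mem_union.mp hmem with h | h
          · exact Finset.notMem_erase _ _ h
          · exact Finset.disjoint_left.mp hx'.1 hkmem h
        have hρk : 0 < ρ k (subst (insert k Λ) x' ω) :=
          pos_of_bSet (hx'.2 ⟨k, hkmem⟩).1 hknot (hζ ⟨k, hkmem⟩)
        have hne0 : (ρF (insert k Λ) (subst (insert k Λ) x' ω) : ℝ≥0∞) ≠ 0 := by
          rw [hfeq]
          exact (ENNReal.div_pos (by exact_mod_cast hρk.ne') hIt).ne'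
        exact pos_iff_ne_zero.mpr (by exact_mod_cast hne0)
      -- (c) domination
      · intro W x' hx' i hiW _
        have hiΛ' : i ∉ insert k Λ := Finset.disjoint_right.mp hx'.1 hiW
        have hik : i ≠ k := fun h => hiΛ' (h ▸ Finset.mem_insert_self k Λ)
        have hxr := hrestrict W x' hx'
        set xr : {y // y ∈ Λ} → E := fun j => x' ⟨j.1, Finset.mem_insert_of_mem j.2⟩ with hxrdef
        obtain ⟨Ck, hCkt, hCk⟩ := hCb (insert k W) xr hxr k (Finset.mem_insert_self _ _)
        have hkmem : k ∈ insert k Λ := Finset.mem_insert_self _ _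
        set xk := x' ⟨k, hkmem⟩ with hxkdef
        have hiV : i ∈ (insert k Λ).erase k ∪ W := Finset.mem_union_right _ hiW
        have hSint := (hx'.2 ⟨k, hkmem⟩).2 i hiV
        refine ⟨fun e => Ck * ⨆ ω : Config (Fin d → ℤ) E,
          rat ρ i k (Function.update (Function.update ω k xk) i e), ?_, ?_⟩
        · rw [lintegral_const_mul' _ _ hCkt]
          exact ENNReal.mul_ne_top hCkt hSint.ne
        · intro ω e
          set ξ := Function.update (subst (insert k Λ) x' ω) i e with hξdef
          have hξfix : ∀ j : {y // y ∈ insert k Λ}, ξ j.1 = x' j := by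
            intro j
            have hji : j.1 ≠ i := fun h => hiΛ' (h ▸ j.2)
            rw [hξdef, Function.update_of_ne hji, subst_apply_of_mem j.2]
          obtain ⟨hfeq, hIt⟩ := hF W x' hx' ξ hξfix
          have hsubr : subst Λ xr ξ = ξ :=
            subst_eq_self fun j => hξfix ⟨j.1, Finset.mem_insert_of_mem j.2⟩
          have hIle : Iint lam ρ ρF Λ k ξ ≤ Ck := hCk ξ hsubr
          have hconfig : Function.update (Function.update ξ k xk) i e = ξ := by
            funext m
            by_cases hmi : m = i
            · subst hmi
              rw [Function.update_self, hξdef, Function.update_self]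
            · rw [Function.update_of_ne hmi]
              by_cases hmk : m = k
              · rw [hmk, Function.update_self]
                exact (hξfix ⟨k, hkmem⟩).symm
              · rw [Function.update_of_ne hmk]
          calc Qf ρ ρF (insert k Λ) i ξ
              = (ρ i ξ : ℝ≥0∞) / ((ρ k ξ : ℝ≥0∞) / Iint lam ρ ρF Λ k ξ) := by
                rw [Qf, hfeq]
            _ ≤ Ck * ((ρ i ξ : ℝ≥0∞) / (ρ k ξ : ℝ≥0∞)) :=
                enn_alg2 ENNReal.coe_ne_top ENNReal.coe_ne_top (hIpos Λ k ξ).ne' hIle hCkt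
            _ ≤ Ck * ⨆ ω : Config (Fin d → ℤ) E,
                rat ρ i k (Function.update (Function.update ω k xk) i e) := by
                refine mul_le_mul_right ?_ Ck
                have : rat ρ i k ξ ≤ ⨆ ω : Config (Fin d → ℤ) E,
                    rat ρ i k (Function.update (Function.update ω k xk) i e) := by
                  rw [← hconfig]
                  exact le_iSup (fun ω => rat ρ i k
                    (Function.update (Function.update ω k xk) i e)) ξ
                exact this
  exact fun Λ => (key Λ).1
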